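/- Let U_s be the repulsive Coulomb potential on ℝ^{3M} with singular set S and minimal nonzero coefficient m, and let Ψ ∈ L²(ℝ^{3M};ℂ) with U_sΨ ∈ L²(ℝ^{3M};ℂ). Then for every δ > 0 and every v ∈ ℝ^{3M} with |v| ≤ δ, the following non-local no-concentration estimate holds: ∫_{{x : dist(x,S) ≤ δ}} |Ψ(x+v/2)| · |Ψ(x−v/2)| dx ≤ (16/m²) · δ² · ‖U_sΨ‖². -/

import Mathlib

set_option maxHeartbeats 2000000

open MeasureTheory Filter
open scoped ENNReal

/-- The difference `R_α − R_β ∈ ℝ³` of the nuclear positions encoded in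
`x = (R_1, …, R_M) ∈ ℝ^{3M}`. -/
noncomputable def Rdiff (M : ℕ) (x : EuclideanSpace ℝ (Fin M × Fin 3)) (α β : Fin M) :
    EuclideanSpace ℝ (Fin 3) := WithLp.toLp 2 (fun j => x (α, j) - x (β, j))

/-- The repulsive Coulomb potential `U_s(x) = Σ_{α<β} C_{αβ}/|R_α−R_β|` on `ℝ^{3M}`
(real-valued; its values on the measure-zero singular set are irrelevant here). -/
noncomputable def coulombUs (M : ℕ) (C : Fin M → Fin M → ℝ)
    (x : EuclideanSpace ℝ (Fin M × Fin 3)) : ℝ :=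
  ∑ q ∈ Finset.univ.filter (fun q : Fin M × Fin M => q.1 < q.2),
    C q.1 q.2 / ‖Rdiff M x q.1 q.2‖

/-- The singular set `S = {x : R_α = R_β for some α<β with C_{αβ} > 0}`. -/
def singSet (M : ℕ) (C : Fin M → Fin M → ℝ) : Set (EuclideanSpace ℝ (Fin M × Fin 3)) :=
  {x | ∃ α β : Fin M, α < β ∧ 0 < C α β ∧ Rdiff M x α β = 0}

/- ### Auxiliary lemmas -/

lemma rdiff_add {M : ℕ} (x y : EuclideanSpace ℝ (Fin M × Fin 3)) (α β : Fin M) :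
    Rdiff M (x + y) α β = Rdiff M x α β + Rdiff M y α β := by
  ext j; simp [Rdiff]; ring

lemma rdiff_smul {M : ℕ} (c : ℝ) (x : EuclideanSpace ℝ (Fin M × Fin 3)) (α β : Fin M) :
    Rdiff M (c • x) α β = c • Rdiff M x α β := by
  ext j; simp [Rdiff]; ring

noncomputable def rowVec {M : ℕ} (x : EuclideanSpace ℝ (Fin M × Fin 3)) (γ : Fin M) :
    EuclideanSpace ℝ (Fin 3) := WithLp.toLp 2 (fun j => x (γ, j))

lemma row_norm_le {M : ℕ} (x : EuclideanSpace ℝ (Fin M × Fin 3)) (γ : Fin M) :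
    ‖rowVec x γ‖ ≤ ‖x‖ := by
  rw [EuclideanSpace.norm_eq, EuclideanSpace.norm_eq]
  apply Real.sqrt_le_sqrt
  rw [Fintype.sum_prod_type (f := fun q : Fin M × Fin 3 => ‖x q‖ ^ 2)]
  exact Finset.single_le_sum
    (f := fun γ' => ∑ j : Fin 3, ‖x (γ', j)‖ ^ 2)
    (fun i _ => Finset.sum_nonneg fun j _ => sq_nonneg _) (Finset.mem_univ γ)

lemma rdiff_norm_le {M : ℕ} (x : EuclideanSpace ℝ (Fin M × Fin 3)) (α β : Fin M) :
    ‖Rdiff M x α β‖ ≤ 2 * ‖x‖ := by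
  have h : Rdiff M x α β = rowVec x α - rowVec x β := by ext j; simp [Rdiff, rowVec]
  rw [h]
  calc ‖rowVec x α - rowVec x β‖ ≤ ‖rowVec x α‖ + ‖rowVec x β‖ := norm_sub_le _ _
    _ ≤ ‖x‖ + ‖x‖ := add_le_add (row_norm_le x α) (row_norm_le x β)
    _ = 2 * ‖x‖ := by ring

lemma pairKer_null (M : ℕ) (α β : Fin M) (hαβ : α ≠ β) :
    (volume : Measure (EuclideanSpace ℝ (Fin M × Fin 3))) {y | Rdiff M y α β = 0} = 0 := by
  let L : EuclideanSpace ℝ (Fin M × Fin 3) →ₗ[ℝ] EuclideanSpace ℝ (Fin 3) :=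
    { toFun := fun y => Rdiff M y α β
      map_add' := fun x y => rdiff_add x y α β
      map_smul' := fun c x => rdiff_smul c x α β }
  have hker : ∀ y, y ∈ LinearMap.ker L ↔ Rdiff M y α β = 0 := fun y => Iff.rfl
  have h0 : (volume : Measure (EuclideanSpace ℝ (Fin M × Fin 3)))
      (LinearMap.ker L : Set (EuclideanSpace ℝ (Fin M × Fin 3))) = 0 := by
    apply Measure.addHaar_submodule
    intro htop
    have h1 : (EuclideanSpace.single ((α, (0 : Fin 3)) : Fin M × Fin 3) (1 : ℝ)) ∈
        LinearMap.ker L := by rw [htop]; trivial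
    have h2 : Rdiff M (EuclideanSpace.single ((α, (0 : Fin 3)) : Fin M × Fin 3) (1 : ℝ)) α β
        ((0 : Fin 3)) = 0 := by
      have := congrArg (fun z : EuclideanSpace ℝ (Fin 3) => z (0 : Fin 3)) ((hker _).1 h1)
      exact this
    simp [Rdiff, EuclideanSpace.single_apply, Prod.mk.injEq, hαβ.symm] at h2
  exact measure_mono_null (fun y hy => (hker y).2 hy) h0

lemma badSet_null (M : ℕ) :
    (volume : Measure (EuclideanSpace ℝ (Fin M × Fin 3)))
      {y | ∃ α β : Fin M, α < β ∧ Rdiff M y α β = 0} = 0 := by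
  apply measure_mono_null
    (show {y : EuclideanSpace ℝ (Fin M × Fin 3) | ∃ α β : Fin M, α < β ∧ Rdiff M y α β = 0} ⊆
      ⋃ p : {p : Fin M × Fin M // p.1 ≠ p.2}, {y | Rdiff M y p.1.1 p.1.2 = 0} from ?_)
    (measure_iUnion_null fun p => pairKer_null _ _ _ p.2)
  rintro y ⟨α, β, hlt, h0⟩
  exact Set.mem_iUnion.2 ⟨⟨(α, β), ne_of_lt hlt⟩, h0⟩

lemma coulombUs_lower {M : ℕ} (C : Fin M → Fin M → ℝ) (hC : ∀ α β : Fin M, 0 ≤ C α β)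
    {m : ℝ} {y : EuclideanSpace ℝ (Fin M × Fin 3)} {α β : Fin M} (hαβ : α < β)
    {t : ℝ} (hR : ‖Rdiff M y α β‖ ≤ t) (hRne : Rdiff M y α β ≠ 0)
    (hmC : m ≤ C α β) :
    m / t ≤ coulombUs M C y := by
  have hRpos : 0 < ‖Rdiff M y α β‖ := norm_pos_iff.2 hRne
  calc m / t ≤ C α β / ‖Rdiff M y α β‖ := div_le_div₀ (hC α β) hmC hRpos hR
    _ ≤ coulombUs M C y := by
      rw [coulombUs]
      exact Finset.single_le_sum (f := fun q : Fin M × Fin M => C q.1 q.2 / ‖Rdiff M y q.1 q.2‖)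
        (a := (α, β)) (s := Finset.univ.filter (fun q : Fin M × Fin M => q.1 < q.2))
        (fun q _ => div_nonneg (hC q.1 q.2) (norm_nonneg _))
        (Finset.mem_filter.2 ⟨Finset.mem_univ (α, β), hαβ⟩)

theorem coulomb_nonlocal_no_concentration (M : ℕ) (hM : 2 ≤ M) (C : Fin M → Fin M → ℝ)
    (hC : ∀ α β : Fin M, 0 ≤ C α β)
    (hne : ∃ α β : Fin M, α < β ∧ 0 < C α β)
    (m : ℝ) (hm : 0 < m)
    (hmle : ∀ α β : Fin M, α < β → 0 < C α β → m ≤ C α β)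
    (Ψ : EuclideanSpace ℝ (Fin M × Fin 3) → ℂ)
    (hΨ : MemLp Ψ 2 (volume : Measure (EuclideanSpace ℝ (Fin M × Fin 3))))
    (hUsΨ : MemLp (fun x => (coulombUs M C x : ℂ) * Ψ x) 2
      (volume : Measure (EuclideanSpace ℝ (Fin M × Fin 3))))
    (δ : ℝ) (hδ : 0 < δ) (v : EuclideanSpace ℝ (Fin M × Fin 3)) (hv : ‖v‖ ≤ δ) :
    ∫⁻ x in {x | Metric.infDist x (singSet M C) ≤ δ},
        ENNReal.ofReal (‖Ψ (x + (2 : ℝ)⁻¹ • v)‖ * ‖Ψ (x - (2 : ℝ)⁻¹ • v)‖)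
      ≤ ENNReal.ofReal ((16 / m ^ 2) * δ ^ 2 *
          (eLpNorm (fun x => (coulombUs M C x : ℂ) * Ψ x) 2 volume).toReal ^ 2) := by
  classical
  obtain ⟨α₀, β₀, hlt₀, hpos₀⟩ := hne
  set c : EuclideanSpace ℝ (Fin M × Fin 3) := (2 : ℝ)⁻¹ • v with hcdef
  set f : EuclideanSpace ℝ (Fin M × Fin 3) → ℂ :=
    fun x => (coulombUs M C x : ℂ) * Ψ x with hfdef
  set F : EuclideanSpace ℝ (Fin M × Fin 3) → ℝ≥0∞ := fun y => (‖f y‖₊ : ℝ≥0∞) with hFdef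
  set A : Set (EuclideanSpace ℝ (Fin M × Fin 3)) :=
    {x | Metric.infDist x (singSet M C) ≤ δ} with hAdef
  set N : Set (EuclideanSpace ℝ (Fin M × Fin 3)) :=
    {y | ∃ α β : Fin M, α < β ∧ Rdiff M y α β = 0} with hNdef
  have hc_norm : ‖c‖ ≤ δ / 2 := by
    rw [hcdef, norm_smul, Real.norm_eq_abs, abs_of_pos (by norm_num : (0:ℝ) < (2:ℝ)⁻¹)]
    linarith
  have hS0 : (singSet M C).Nonempty :=
    ⟨0, α₀, β₀, hlt₀, hpos₀, by ext j; simp [Rdiff]⟩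
  have hN : volume N = 0 := badSet_null M
  have hplus : ∀ᵐ x : EuclideanSpace ℝ (Fin M × Fin 3), ¬ (x + c ∈ N) := by
    have h := (measurePreserving_add_right
      (volume : Measure (EuclideanSpace ℝ (Fin M × Fin 3)))
      c).quasiMeasurePreserving.preimage_null hN
    rw [ae_iff]; simp only [not_not]; exact h
  have hminus : ∀ᵐ x : EuclideanSpace ℝ (Fin M × Fin 3), ¬ (x - c ∈ N) := by
    have h := (measurePreserving_add_right
      (volume : Measure (EuclideanSpace ℝ (Fin M × Fin 3)))
      (-c)).quasiMeasurePreserving.preimage_null hN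
    rw [ae_iff]; simp only [not_not, sub_eq_add_neg]; exact h
  -- pointwise bound
  have key : ∀ᵐ x : EuclideanSpace ℝ (Fin M × Fin 3), x ∈ A →
      ENNReal.ofReal (‖Ψ (x + c)‖ * ‖Ψ (x - c)‖) ≤
        ENNReal.ofReal ((4 * δ / m) ^ 2) * (F (x + c) * F (x - c)) := by
    filter_upwards [hplus, hminus] with x hx1 hx2 hxA
    obtain ⟨y, hyS, hxy⟩ := (Metric.infDist_lt_iff hS0).1
      (lt_of_le_of_lt hxA (by linarith : δ < 3 / 2 * δ))
    obtain ⟨α, β, hαβ, hCpos, hR0⟩ := hyS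
    rw [dist_eq_norm] at hxy
    have hb : ∀ w : EuclideanSpace ℝ (Fin M × Fin 3),
        ‖w - y‖ ≤ 2 * δ → ‖Rdiff M w α β‖ ≤ 4 * δ := by
      intro w hw
      have heq : Rdiff M w α β = Rdiff M (w - y) α β := by
        have h := rdiff_add (w - y) y α β
        rw [sub_add_cancel] at h
        rw [h, hR0, add_zero]
      rw [heq]
      calc ‖Rdiff M (w - y) α β‖ ≤ 2 * ‖w - y‖ := rdiff_norm_le _ _ _
        _ ≤ 4 * δ := by linarith
    have hwp : ‖(x + c) - y‖ ≤ 2 * δ := by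
      rw [add_sub_right_comm]
      calc ‖x - y + c‖ ≤ ‖x - y‖ + ‖c‖ := norm_add_le _ _
        _ ≤ 2 * δ := by linarith
    have hwm : ‖(x - c) - y‖ ≤ 2 * δ := by
      rw [sub_right_comm]
      calc ‖x - y - c‖ ≤ ‖x - y‖ + ‖c‖ := norm_sub_le _ _
        _ ≤ 2 * δ := by linarith
    have hside : ∀ w : EuclideanSpace ℝ (Fin M × Fin 3), ¬ (w ∈ N) →
        ‖Rdiff M w α β‖ ≤ 4 * δ → ‖Ψ w‖ ≤ (4 * δ / m) * ‖f w‖ := by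
      intro w hwN hwR
      have hRne : Rdiff M w α β ≠ 0 := fun h => hwN ⟨α, β, hαβ, h⟩
      have hUs : m / (4 * δ) ≤ coulombUs M C w :=
        coulombUs_lower C hC hαβ hwR hRne (hmle α β hαβ hCpos)
      have hUspos : 0 < coulombUs M C w :=
        lt_of_lt_of_le (div_pos hm (by linarith)) hUs
      have hfw : ‖f w‖ = |coulombUs M C w| * ‖Ψ w‖ := by
        rw [hfdef]
        simp [Complex.norm_real, Real.norm_eq_abs]
      have h1 : (m / (4 * δ)) * ‖Ψ w‖ ≤ ‖f w‖ := by
        rw [hfw, abs_of_pos hUspos]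
        exact mul_le_mul_of_nonneg_right hUs (norm_nonneg _)
      have h2 : ‖Ψ w‖ = (4 * δ / m) * ((m / (4 * δ)) * ‖Ψ w‖) := by
        field_simp
      rw [h2]
      exact mul_le_mul_of_nonneg_left h1 (by positivity)
    have h3 : ‖Ψ (x + c)‖ * ‖Ψ (x - c)‖ ≤
        ((4 * δ / m) * ‖f (x + c)‖) * ((4 * δ / m) * ‖f (x - c)‖) :=
      mul_le_mul (hside _ hx1 (hb _ hwp)) (hside _ hx2 (hb _ hwm))
        (norm_nonneg _) (by positivity)
    calc ENNReal.ofReal (‖Ψ (x + c)‖ * ‖Ψ (x - c)‖)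
        ≤ ENNReal.ofReal ((4 * δ / m) ^ 2 * (‖f (x + c)‖ * ‖f (x - c)‖)) :=
          ENNReal.ofReal_le_ofReal (h3.trans (le_of_eq (by ring)))
      _ = ENNReal.ofReal ((4 * δ / m) ^ 2) * (F (x + c) * F (x - c)) := by
          rw [ENNReal.ofReal_mul (by positivity), ENNReal.ofReal_mul (norm_nonneg _),
            ofReal_norm, ofReal_norm]
          rfl
  -- measurability
  have hA : MeasurableSet A :=
    measurableSet_le (Metric.continuous_infDist_pt (singSet M C)).measurable measurable_const
  have hFm : AEMeasurable F volume := hUsΨ.aestronglyMeasurable.enorm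
  have hFp : AEMeasurable (fun x => F (x + c)) volume :=
    hFm.comp_quasiMeasurePreserving
      (measurePreserving_add_right volume c).quasiMeasurePreserving
  have hFm2 : AEMeasurable (fun x => F (x - c)) volume := by
    have h := hFm.comp_quasiMeasurePreserving
      (measurePreserving_add_right volume (-c)).quasiMeasurePreserving
    have heq : (fun x => F (x - c)) = F ∘ fun x => x + -c := by
      funext x; rw [sub_eq_add_neg]; rfl
    rw [heq]; exact h
  have hCS : ∫⁻ x, F (x + c) * F (x - c) ≤
      (∫⁻ x, F (x + c) ^ (2:ℝ)) ^ (1 / (2:ℝ)) * (∫⁻ x, F (x - c) ^ (2:ℝ)) ^ (1 / (2:ℝ)) := by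
    have h := ENNReal.lintegral_mul_le_Lp_mul_Lq volume
      Real.HolderConjugate.two_two hFp hFm2
    simpa using h
  have ht1 : ∫⁻ x, F (x + c) ^ (2:ℝ) = ∫⁻ x, F x ^ (2:ℝ) :=
    lintegral_add_right_eq_self (fun y => F y ^ (2:ℝ)) c
  have ht2 : ∫⁻ x, F (x - c) ^ (2:ℝ) = ∫⁻ x, F x ^ (2:ℝ) := by
    simp only [sub_eq_add_neg]
    exact lintegral_add_right_eq_self (fun y => F y ^ (2:ℝ)) (-c)
  have hsn : (∫⁻ x, F x ^ (2:ℝ)) ^ (1 / (2:ℝ)) = eLpNorm f 2 volume := by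
    rw [eLpNorm_eq_lintegral_rpow_enorm_toReal (by norm_num) (by norm_num)]
    norm_num [hFdef]
    rfl
  have hTne : eLpNorm f 2 volume ≠ ⊤ := hUsΨ.eLpNorm_ne_top
  calc ∫⁻ x in A, ENNReal.ofReal (‖Ψ (x + c)‖ * ‖Ψ (x - c)‖)
      ≤ ∫⁻ x in A, ENNReal.ofReal ((4 * δ / m) ^ 2) * (F (x + c) * F (x - c)) :=
        lintegral_mono_ae ((ae_restrict_iff' hA).2 key)
    _ ≤ ∫⁻ x, ENNReal.ofReal ((4 * δ / m) ^ 2) * (F (x + c) * F (x - c)) :=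
        setLIntegral_le_lintegral _ _
    _ = ENNReal.ofReal ((4 * δ / m) ^ 2) * ∫⁻ x, F (x + c) * F (x - c) :=
        lintegral_const_mul' _ _ ENNReal.ofReal_ne_top
    _ ≤ ENNReal.ofReal ((4 * δ / m) ^ 2) *
        ((∫⁻ x, F (x + c) ^ (2:ℝ)) ^ (1 / (2:ℝ)) * (∫⁻ x, F (x - c) ^ (2:ℝ)) ^ (1 / (2:ℝ))) :=
        mul_le_mul_right hCS _
    _ = ENNReal.ofReal ((4 * δ / m) ^ 2) * (eLpNorm f 2 volume * eLpNorm f 2 volume) := by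
        rw [ht1, ht2, hsn]
    _ = ENNReal.ofReal ((16 / m ^ 2) * δ ^ 2 * (eLpNorm f 2 volume).toReal ^ 2) := by
        have hq : eLpNorm f 2 volume * eLpNorm f 2 volume =
            ENNReal.ofReal ((eLpNorm f 2 volume).toReal ^ 2) := by
          rw [sq, ENNReal.ofReal_mul ENNReal.toReal_nonneg, ENNReal.ofReal_toReal hTne]
        rw [hq, ← ENNReal.ofReal_mul (by positivity)]
        congr 1
        ring
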